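/- Let p be a prime number and let a, b, c be integers with |a| > 1 and |b| = p. Suppose there exist integers r1 and r2 with a*x^2 + b*x + c = a*(x - r1)*(x - r2) identically in x. Then |a| = p (i.e., a = p or a = -p), and there exists an odd positive integer T such that 4*c = a*(1 - T^2). -/
import Mathlib


theorem pType1_necessary (p : ℕ) (hp : p.Prime) (a b c : ℤ)
    (ha : 1 < |a|) (hb : |b| = (p : ℤ))
    (h : ∃ r1 r2 : ℤ, ∀ x : ℤ, a * x ^ 2 + b * x + c = a * (x - r1) * (x - r2)) :
    |a| = (p : ℤ) ∧ (a = (p : ℤ) ∨ a = -(p : ℤ)) ∧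
      ∃ T : ℤ, Odd T ∧ 0 < T ∧ 4 * c = a * (1 - T ^ 2) := by
  obtain ⟨r1, r2, hx⟩ := h
  have hc : c = a * (r1 * r2) := by linear_combination hx 0
  have hb' : b = -(a * (r1 + r2)) := by linear_combination hx 1 - hx 0
  have habs : |a| * |r1 + r2| = (p : ℤ) := by
    rw [← abs_mul, ← abs_neg, ← hb', hb]
  -- |a| divides p
  have hdvd : a.natAbs ∣ p := by
    have : (a.natAbs : ℤ) ∣ (p : ℤ) := ⟨|r1 + r2|, by rw [← habs, Int.abs_eq_natAbs]⟩
    exact_mod_cast this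
  have hone : a.natAbs = 1 ∨ a.natAbs = p := hp.eq_one_or_self_of_dvd _ hdvd
  have hap : |a| = (p : ℤ) := by
    rcases hone with h1 | h1
    · exfalso; rw [Int.abs_eq_natAbs, h1] at ha; norm_num at ha
    · rw [Int.abs_eq_natAbs, h1]
  have hpne : (p : ℤ) ≠ 0 := by exact_mod_cast hp.pos.ne'
  have hs : |r1 + r2| = 1 := by
    have := habs
    rw [hap] at this
    have := mul_left_cancel₀ hpne (by linarith : (p : ℤ) * |r1 + r2| = (p : ℤ) * 1)
    exact this
  have hs2 : (r1 + r2) ^ 2 = 1 := by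
    rcases abs_eq (by norm_num : (0:ℤ) ≤ 1) |>.mp hs with h1 | h1 <;> rw [h1] <;> ring
  have hsodd : Odd (r1 + r2) := by
    rcases abs_eq (by norm_num : (0:ℤ) ≤ 1) |>.mp hs with h1 | h1 <;> rw [h1] <;> decide
  have hdodd : Odd (r1 - r2) := by
    rcases hsodd with ⟨k, hk⟩
    exact ⟨k - r2, by linarith⟩
  refine ⟨hap, ?_, |r1 - r2|, ?_, ?_, ?_⟩
  · rcases abs_eq (by positivity : (0:ℤ) ≤ (p:ℤ)) |>.mp hap with h1 | h1
    · exact Or.inl h1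
    · exact Or.inr h1
  · rcases abs_choice (r1 - r2) with h1 | h1 <;> rw [h1]
    · exact hdodd
    · exact hdodd.neg
  · have : r1 - r2 ≠ 0 := by
      intro h0; rw [h0] at hdodd; exact (Int.not_odd_iff_even.mpr Even.zero) hdodd
    exact abs_pos.mpr this
  · have : |r1 - r2| ^ 2 = (r1 - r2) ^ 2 := sq_abs _
    rw [this]
    linear_combination 4 * hc + a * hs2
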